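/- Let M(a, κ) = c κ I_1(a)/I_0(a) with a constant c > 0, and suppose c κ ≤ 1 in the sense that κ ≤ κ_♯ where κ_♯ is defined by c κ_♯ = 1. Then the equation M(a,κ) = a has no solution with a > 0; i.e., the only fixed point of a ↦ cκ I_1(a)/I_0(a) on [0,∞) is a = 0. -/
import Mathlib


open Real

set_option maxHeartbeats 1000000

/-- The modified Bessel function of the first kind of integer order `n`,
`I_n(a) = (1/π) ∫_0^π e^{a cos θ} cos(nθ) dθ`. -/
noncomputable def besselI (n : ℕ) (a : ℝ) : ℝ :=
  (1 / π) * ∫ θ in (0 : ℝ)..π, Real.exp (a * Real.cos θ) * Real.cos (n * θ)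

lemma sinh_lt_mul_cosh_aux {x : ℝ} (hx : 0 < x) : Real.sinh x < x * Real.cosh x := by
  have h : StrictMonoOn (fun y : ℝ => y * Real.cosh y - Real.sinh y) (Set.Ici 0) := by
    apply strictMonoOn_of_deriv_pos (convex_Ici 0)
    · fun_prop
    · intro y hy
      rw [interior_Ici] at hy
      have : HasDerivAt (fun y : ℝ => y * Real.cosh y - Real.sinh y)
          (1 * Real.cosh y + y * Real.sinh y - Real.cosh y) y := by
        exact ((hasDerivAt_id y).mul (Real.hasDerivAt_cosh y)).sub (Real.hasDerivAt_sinh y)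
      rw [this.deriv]
      have hy' : (0:ℝ) < y := hy
      have hs := Real.sinh_pos_iff.2 hy'
      nlinarith [mul_pos hy' hs]
  have h0 := h (Set.self_mem_Ici) (Set.mem_Ici.2 hx.le) hx
  simpa using h0

lemma besselI_zero_pos (a : ℝ) : 0 < besselI 0 a := by
  unfold besselI
  apply mul_pos (by positivity)
  apply intervalIntegral.intervalIntegral_pos_of_pos_on
  · apply Continuous.intervalIntegrable; fun_prop
  · intro x _
    simp only [Nat.cast_zero, zero_mul, Real.cos_zero, mul_one]
    exact Real.exp_pos _
  · exact Real.pi_pos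

lemma besselI_one_lt (a : ℝ) (ha : 0 < a) : besselI 1 a < a * besselI 0 a := by
  set g : ℝ → ℝ := fun θ => a * Real.exp (a * Real.cos θ) - Real.exp (a * Real.cos θ) * Real.cos θ
    with hg
  have hgc : Continuous g := by fun_prop
  have key : 0 < ∫ θ in (0:ℝ)..π, g θ := by
    have hsplit : (∫ θ in (0:ℝ)..π, g θ)
        = (∫ θ in (0:ℝ)..(π/2), g θ) + ∫ θ in (π/2:ℝ)..π, g θ := by
      rw [intervalIntegral.integral_add_adjacent_intervals] <;>
        exact hgc.intervalIntegrable _ _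
    have hsub : (∫ θ in (π/2:ℝ)..π, g θ) = ∫ θ in (0:ℝ)..(π/2), g (π - θ) := by
      rw [intervalIntegral.integral_comp_sub_left g π, sub_zero]
      congr 1
      ring
    have hgc2 : Continuous (fun θ : ℝ => g (π - θ)) := hgc.comp (by continuity)
    have hcomb : (∫ θ in (0:ℝ)..(π/2), g θ) + (∫ θ in (0:ℝ)..(π/2), g (π - θ))
        = ∫ θ in (0:ℝ)..(π/2), (g θ + g (π - θ)) :=
      (intervalIntegral.integral_add (hgc.intervalIntegrable _ _)
        (hgc2.intervalIntegrable _ _)).symm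
    rw [hsplit, hsub, hcomb]
    apply intervalIntegral.intervalIntegral_pos_of_pos_on
    · exact (hgc.add hgc2).intervalIntegrable _ _
    · intro x hx
      have hc0 : 0 < Real.cos x :=
        Real.cos_pos_of_mem_Ioo ⟨by linarith [hx.1, Real.pi_pos], hx.2⟩
      have hc1 : Real.cos x ≤ 1 := Real.cos_le_one x
      set cx := Real.cos x with hcx
      have hsinh := sinh_lt_mul_cosh_aux (mul_pos ha hc0)
      rw [Real.sinh_eq, Real.cosh_eq] at hsinh
      have hu : 0 < Real.exp (a * cx) := Real.exp_pos _
      have hv : 0 < Real.exp (-(a * cx)) := Real.exp_pos _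
      have huv : Real.exp (-(a * cx)) ≤ Real.exp (a * cx) :=
        Real.exp_le_exp.2 (by nlinarith)
      simp only [hg, Real.cos_pi_sub, mul_neg, ← hcx]
      nlinarith [mul_nonneg (sub_nonneg.2 hc1) (sub_nonneg.2 huv),
        mul_nonneg (mul_nonneg ha.le (sub_nonneg.2 hc1)) (by positivity : (0:ℝ) ≤ rexp (a*cx) + rexp (-(a*cx)))]
    · exact pi_div_two_pos
  have h0 : besselI 0 a = (1/π) * ∫ θ in (0:ℝ)..π, Real.exp (a * Real.cos θ) := by
    unfold besselI; norm_num
  have h1 : besselI 1 a = (1/π) * ∫ θ in (0:ℝ)..π, Real.exp (a * Real.cos θ) * Real.cos θ := by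
    unfold besselI; norm_num
  have hlin : a * besselI 0 a - besselI 1 a = (1/π) * ∫ θ in (0:ℝ)..π, g θ := by
    rw [h0, h1, hg]
    rw [intervalIntegral.integral_sub (by apply Continuous.intervalIntegrable; fun_prop)
      (by apply Continuous.intervalIntegrable; fun_prop),
      intervalIntegral.integral_const_mul]
    ring
  have hπ : 0 < (1/π : ℝ) := by positivity
  nlinarith [mul_pos hπ key]

/-- Below the critical coupling, the Kuramoto self-consistency equation
`c κ I₁(a)/I₀(a) = a` has only the trivial solution `a = 0` on `[0, ∞)`. -/
theorem kuramoto_subcritical_unique_fixed_point (c κ : ℝ) (hc : 0 < c) (hκ : 0 < κ)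
    (hsub : c * κ ≤ 1) (a : ℝ) (ha : 0 ≤ a)
    (hfix : c * κ * (besselI 1 a / besselI 0 a) = a) : a = 0 := by
  by_contra h
  have ha' : 0 < a := lt_of_le_of_ne ha (Ne.symm h)
  have hI0 := besselI_zero_pos a
  have hI1 := besselI_one_lt a ha'
  have hr : besselI 1 a / besselI 0 a < a := (div_lt_iff₀ hI0).2 (by nlinarith)
  have hcκ : 0 < c * κ := mul_pos hc hκ
  have hrpos : 0 < besselI 1 a / besselI 0 a := by
    by_contra hneg
    push_neg at hneg
    nlinarith
  nlinarith
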